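/- Let V, W be closed subspaces of H with H = V ⊕ W⊥ and let (W,w) be a fusion frame for W with analysis operator T*. A vector f̂ ∈ V satisfies the consistency condition T* f̂ = T* f if and only if f̂ = π_{V,W⊥} f. -/

import Mathlib

/-- Let `V`, `W` be closed subspaces of `H` with `H = V ⊕ Wᗮ` and `(W_i, w_i)` a fusion
frame for `W` with analysis operator `T* f = (w_i π_{W_i} f)_i`. A vector `f̂ ∈ V`
satisfies the consistency condition `T* f̂ = T* f` iff `f̂ = π_{V,Wᗮ} f`. -/
theorem consistent_reconstruction_iff_oblique_projection
    {H : Type*} [NormedAddCommGroup H] [InnerProductSpace ℂ H] [CompleteSpace H]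
    {I : Type*} (V W : Submodule ℂ H) [CompleteSpace V] [CompleteSpace W]
    (hcompl : IsCompl V Wᗮ)
    (Wi : I → Submodule ℂ H) [∀ i, CompleteSpace (Wi i)] (hWiW : ∀ i, Wi i ≤ W)
    (w : I → ℝ) (hw : ∀ i, 0 < w i)
    (α β : ℝ) (hα : 0 < α) (hαβ : α ≤ β)
    (hframe : ∀ f ∈ W,
      Summable (fun i => (w i) ^ 2 * ‖(Submodule.orthogonalProjectionOnto (Wi i) f : H)‖ ^ 2)
      ∧ α * ‖f‖ ^ 2 ≤ ∑' i, (w i) ^ 2 * ‖(Submodule.orthogonalProjectionOnto (Wi i) f : H)‖ ^ 2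
      ∧ ∑' i, (w i) ^ 2 * ‖(Submodule.orthogonalProjectionOnto (Wi i) f : H)‖ ^ 2 ≤ β * ‖f‖ ^ 2)
    (P : H →L[ℂ] H) (hPV : ∀ f ∈ V, P f = f) (hPW : ∀ f ∈ Wᗮ, P f = 0)
    (f fhat : H) (hfhat : fhat ∈ V) :
    (∀ i, w i • (Submodule.orthogonalProjectionOnto (Wi i) fhat : H)
        = w i • (Submodule.orthogonalProjectionOnto (Wi i) f : H))
      ↔ fhat = P f := by
  constructor
  · intro h
    -- the projections agree
    have hproj : ∀ i, (Submodule.orthogonalProjectionOnto (Wi i) fhat : H)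
        = (Submodule.orthogonalProjectionOnto (Wi i) f : H) := by
      intro i
      have := h i
      exact smul_right_injective H (hw i).ne' this
    -- hence fhat - f ∈ Wᗮ
    have hmem : fhat - f ∈ Wᗮ := by
      set g : H := (Submodule.orthogonalProjectionOnto W (fhat - f) : H) with hg
      have hgW : g ∈ W := (Submodule.orthogonalProjectionOnto W (fhat - f)).2
      have hzero : ∀ i, (Submodule.orthogonalProjectionOnto (Wi i) g : H) = 0 := by
        intro i
        have hle := hWiW i
        have h1 : Submodule.orthogonalProjectionOnto (Wi i) g
            = Submodule.orthogonalProjectionOnto (Wi i) (fhat - f) := by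
          simpa [hg] using
            Submodule.orthogonalProjectionOnto_starProjection_of_le hle (fhat - f)
        have h2 : (Submodule.orthogonalProjectionOnto (Wi i) (fhat - f) : H) = 0 := by
          rw [map_sub]
          push_cast
          rw [hproj i, sub_self]
        rw [h1, h2]
      have hsum : ∑' i, (w i) ^ 2 * ‖(Submodule.orthogonalProjectionOnto (Wi i) g : H)‖ ^ 2 = 0 := by
        simp [hzero]
      have hlow := (hframe g hgW).2.1
      rw [hsum] at hlow
      have hg0 : g = 0 := by
        have : ‖g‖ ^ 2 = 0 := by nlinarith [sq_nonneg ‖g‖]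
        simpa using pow_eq_zero_iff (n := 2) (by norm_num) |>.mp this
      have : Submodule.orthogonalProjectionOnto W (fhat - f) = 0 := by
        ext; simpa [hg] using hg0
      exact Submodule.orthogonalProjectionOnto_eq_zero_iff.mp this
    have h1 : P fhat = fhat := hPV fhat hfhat
    have h2 : P (fhat - f) = 0 := hPW _ hmem
    rw [map_sub, h1, sub_eq_zero] at h2
    exact h2
  · intro h i
    obtain ⟨u, v, hu, hv, huv⟩ :=
      Submodule.codisjoint_iff_exists_add_eq.mp hcompl.codisjoint f
    have hPf : P f = u := by
      rw [← huv, map_add, hPV u hu, hPW v hv, add_zero]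
    have hdiff : f - fhat ∈ Wᗮ := by
      rw [h, hPf, ← huv]
      simpa using hv
    have hWi : f - fhat ∈ (Wi i)ᗮ := Submodule.orthogonal_le (hWiW i) hdiff
    have : (Submodule.orthogonalProjectionOnto (Wi i) (f - fhat) : H) = 0 := by
      have := Submodule.orthogonalProjectionOnto_apply_of_mem_orthogonal hWi
      simp [this]
    rw [map_sub] at this
    push_cast at this
    rw [sub_eq_zero] at this
    rw [this]
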